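/- Let f : ℝ^2 → ℂ be a function and T_1, T_2 > 0 be such that: for every a_2 ∈ ℝ the function x_1 ↦ f(x_1, a_2) is a T_1-periodic trigonometric polynomial, and for every a_1 ∈ ℝ the function x_2 ↦ f(a_1, x_2) is a T_2-periodic trigonometric polynomial. Then there exist a finite set F ⊂ ℤ^2 and coefficients c_α ∈ ℂ (α ∈ F) such that f(x_1, x_2) = Σ_{(α_1, α_2) ∈ F} c_{(α_1, α_2)} · exp(2πi(α_1 x_1/T_1 + α_2 x_2/T_2)) for all (x_1, x_2) ∈ ℝ^2. No continuity of f is assumed, and no common bound on the degrees of the one-variable sections is assumed. -/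

import Mathlib

open scoped BigOperators

noncomputable def EE (T : ℝ) (m : ℤ) (t : ℝ) : ℂ :=
  Complex.exp (2 * Real.pi * Complex.I * (m : ℂ) * (t : ℂ) / (T : ℂ))

lemma EE_eq_zpow {T : ℝ} (hT : T ≠ 0) (m : ℤ) (t : ℝ) :
    EE T m t = Complex.exp (2 * Real.pi * Complex.I * (t : ℂ) / (T : ℂ)) ^ m := by
  rw [← Complex.exp_int_mul, EE]
  ring_nf

-- fiber of the exponential map is countable
lemma fiber_countable {T : ℝ} (hT : T ≠ 0) (w : ℂ) :
    {a : ℝ | Complex.exp (2 * Real.pi * Complex.I * (a : ℂ) / (T : ℂ)) = w}.Countable := by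
  set g : ℝ → ℂ := fun a => Complex.exp (2 * Real.pi * Complex.I * (a : ℂ) / (T : ℂ)) with hg
  rcases Set.eq_empty_or_nonempty {a : ℝ | g a = w} with h | ⟨a₀, ha₀⟩
  · rw [h]; exact Set.countable_empty
  · refine Set.Countable.mono ?_ (Set.countable_range (fun n : ℤ => a₀ + n * T))
    intro a ha
    have : g a = g a₀ := by rw [Set.mem_setOf_eq] at ha ha₀; rw [hg]; simpa using ha.trans ha₀.symm
    simp only [hg] at this
    rw [Complex.exp_eq_exp_iff_exists_int] at this
    obtain ⟨n, hn⟩ := this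
    refine ⟨n, ?_⟩
    have hπ : (Real.pi : ℂ) ≠ 0 := by exact_mod_cast Real.pi_ne_zero
    have hTc : (T : ℂ) ≠ 0 := by exact_mod_cast hT
    have : (a : ℂ) = a₀ + n * T := by
      field_simp at hn
      have h2 : (2 : ℂ) * Real.pi * Complex.I * a = 2 * Real.pi * Complex.I * (a₀ + n * T) := by
        rw [hn]; ring
      have := mul_left_cancel₀ (a := 2 * (Real.pi : ℂ) * Complex.I)
        (by simp [hπ, Complex.I_ne_zero]) h2
      exact this
    exact_mod_cast this.symm

open Polynomial in
lemma trig_vanish {T : ℝ} (hT : T ≠ 0) (S : Finset ℤ) (b : ℤ → ℂ) (A : Set ℝ)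
    (hA : ¬ A.Countable)
    (hz : ∀ a ∈ A, ∑ m ∈ S, b m * EE T m a = 0) :
    ∀ t : ℝ, ∑ m ∈ S, b m * EE T m t = 0 := by
  set d : ℕ := S.sup (fun m => (-m).toNat) with hd
  have hmd : ∀ m ∈ S, (0:ℤ) ≤ m + d := by
    intro m hm
    have : (-m).toNat ≤ d := Finset.le_sup (f := fun m => (-m).toNat) hm
    omega
  set P : ℂ[X] := ∑ m ∈ S, Polynomial.C (b m) * Polynomial.X ^ ((m + d).toNat) with hP
  set w : ℝ → ℂ := fun t => Complex.exp (2 * Real.pi * Complex.I * (t : ℂ) / (T : ℂ)) with hw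
  have hw0 : ∀ t, w t ≠ 0 := fun t => Complex.exp_ne_zero _
  have hPev : ∀ t : ℝ, P.eval (w t) = (w t) ^ (d : ℤ) * ∑ m ∈ S, b m * EE T m t := by
    intro t
    rw [hP]
    simp only [Polynomial.eval_finset_sum, Polynomial.eval_mul, Polynomial.eval_C,
      Polynomial.eval_pow, Polynomial.eval_X]
    rw [Finset.mul_sum]
    refine Finset.sum_congr rfl (fun m hm => ?_)
    rw [EE_eq_zpow hT]
    show b m * w t ^ (m + (d:ℤ)).toNat = w t ^ (d:ℤ) * (b m * w t ^ m)
    have : (w t) ^ ((m + d).toNat) = (w t) ^ ((m : ℤ) + d) := by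
      rw [← zpow_natCast, Int.toNat_of_nonneg (hmd m hm)]
    rw [this, zpow_add₀ (hw0 t)]
    ring
  -- the image of A under w is infinite
  have himg : (w '' A).Infinite := by
    intro hfin
    apply hA
    have : A ⊆ ⋃ v ∈ (w '' A), {a : ℝ | w a = v} := by
      intro a ha
      exact Set.mem_biUnion (Set.mem_image_of_mem w ha) rfl
    refine Set.Countable.mono this ?_
    exact Set.Countable.biUnion hfin.countable (fun v _ => fiber_countable hT v)
  have hP0 : P = 0 := by
    apply Polynomial.eq_zero_of_infinite_isRoot
    refine himg.mono ?_
    rintro v ⟨a, ha, rfl⟩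
    have := hPev a
    rw [hz a ha, mul_zero] at this
    exact this
  intro t
  have := hPev t
  rw [hP0, Polynomial.eval_zero] at this
  have := this.symm
  rcases mul_eq_zero.mp this with h | h
  · exact absurd h (zpow_ne_zero _ (hw0 t))
  · exact h

lemma sum_Icc_eq_fin (N : ℕ) (g : ℤ → ℂ) :
    ∑ m ∈ Finset.Icc (-(N:ℤ)) N, g m = ∑ i : Fin (2*N+1), g ((i:ℤ) - N) := by
  rw [Fin.sum_univ_eq_sum_range (fun i => g ((i:ℤ) - N))]
  refine Finset.sum_nbij' (i := fun m => (m + N).toNat) (j := fun i => (i:ℤ) - N)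
    ?_ ?_ ?_ ?_ ?_ <;> intros a ha <;>
    simp only [Finset.mem_Icc, Finset.mem_range] at * <;> first | omega | (congr 1; omega)

lemma nodes_inj {T : ℝ} (hT : T ≠ 0) (K : ℕ) (hK : 0 < K) :
    Function.Injective (fun j : Fin K => EE T 1 ((j : ℝ) * T / K)) := by
  intro j k h
  simp only [EE] at h
  rw [Complex.exp_eq_exp_iff_exists_int] at h
  obtain ⟨n, hn⟩ := h
  have hπ : (Real.pi : ℂ) ≠ 0 := by exact_mod_cast Real.pi_ne_zero
  have hTc : (T : ℂ) ≠ 0 := by exact_mod_cast hT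
  have hKc : (K : ℂ) ≠ 0 := Nat.cast_ne_zero.mpr hK.ne'
  have key : (j : ℂ) = (k : ℂ) + n * K := by
    push_cast at hn
    field_simp at hn
    have h2 : (2:ℂ) * Real.pi * Complex.I * (j : ℂ) * T
        = 2 * Real.pi * Complex.I * ((k:ℂ) + n * K) * T := by
      linear_combination (2 * (Real.pi:ℂ) * Complex.I * (T:ℂ)) * hn
    have h3 := mul_right_cancel₀ hTc h2
    exact mul_left_cancel₀ (show (2:ℂ) * Real.pi * Complex.I ≠ 0 by
      simp [hπ, Complex.I_ne_zero]) h3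
  have hjk : (j : ℤ) = (k : ℤ) + n * K := by exact_mod_cast key
  have hj := j.isLt
  have hk := k.isLt
  have hKK : (0:ℤ) < K := by exact_mod_cast hK
  have hn0 : n = 0 := by
    rcases lt_trichotomy n 0 with h | h | h
    · have : n * (K:ℤ) ≤ -K := by nlinarith
      omega
    · exact h
    · have : (K:ℤ) ≤ n * K := by nlinarith
      omega
  subst hn0
  simp only [zero_mul, add_zero] at hjk
  ext
  omega

lemma EE_eq_pow {T : ℝ} (hT : T ≠ 0) (m : ℤ) (t : ℝ) : EE T m t = (EE T 1 t) ^ m := by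
  rw [EE_eq_zpow hT m, EE_eq_zpow hT 1, zpow_one]

lemma sum_extend (S U : Finset ℤ) (h : S ⊆ U) (b : ℤ → ℂ) (E : ℤ → ℂ) :
    ∑ m ∈ S, b m * E m = ∑ m ∈ U, (if m ∈ S then b m else 0) * E m := by
  classical
  rw [← Finset.sum_subset h (f := fun m => (if m ∈ S then b m else 0) * E m)
    (fun x _ hx => by simp [hx])]
  exact Finset.sum_congr rfl fun m hm => by simp [hm]

lemma EE_mul (T₁ T₂ : ℝ) (m n : ℤ) (x y : ℝ) :
    EE T₁ m x * EE T₂ n y = Complex.exp (2 * Real.pi * Complex.I *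
      ((m : ℂ) * (x : ℂ) / (T₁ : ℂ) + (n : ℂ) * (y : ℂ) / (T₂ : ℂ))) := by
  rw [EE, EE, ← Complex.exp_add]
  congr 1
  ring

/-- Two-variable Prager–Schwaiger-type theorem for trigonometric polynomials: if every
horizontal section of `f : ℝ × ℝ → ℂ` is a `T₁`-periodic trigonometric polynomial and every
vertical section is a `T₂`-periodic trigonometric polynomial (with no continuity and no
common degree bound assumed), then `f` is jointly a trigonometric polynomial with periods
`T₁, T₂`. -/
theorem stmt_16 (f : ℝ × ℝ → ℂ) (T₁ T₂ : ℝ) (hT₁ : 0 < T₁) (hT₂ : 0 < T₂)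
    (hsec₁ : ∀ a₂ : ℝ, ∃ (S : Finset ℤ) (b : ℤ → ℂ), ∀ t : ℝ,
      f (t, a₂) = ∑ m ∈ S, b m * Complex.exp (2 * Real.pi * Complex.I * (m : ℂ) * (t : ℂ) / (T₁ : ℂ)))
    (hsec₂ : ∀ a₁ : ℝ, ∃ (S : Finset ℤ) (b : ℤ → ℂ), ∀ t : ℝ,
      f (a₁, t) = ∑ m ∈ S, b m * Complex.exp (2 * Real.pi * Complex.I * (m : ℂ) * (t : ℂ) / (T₂ : ℂ))) :
    ∃ (F : Finset (ℤ × ℤ)) (c : ℤ × ℤ → ℂ), ∀ x₁ x₂ : ℝ,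
      f (x₁, x₂) = ∑ α ∈ F, c α *
        Complex.exp (2 * Real.pi * Complex.I *
          ((α.1 : ℂ) * (x₁ : ℂ) / (T₁ : ℂ) + (α.2 : ℂ) * (x₂ : ℂ) / (T₂ : ℂ))) := by
  classical
  choose S₁ b₁ hb₁ using hsec₁
  choose S₂ b₂ hb₂ using hsec₂
  have hb₁' : ∀ a t, f (t, a) = ∑ m ∈ S₁ a, b₁ a m * EE T₁ m t := hb₁
  have hb₂' : ∀ a t, f (a, t) = ∑ m ∈ S₂ a, b₂ a m * EE T₂ m t := hb₂
  set bt₁ : ℝ → ℤ → ℂ := fun a m => if m ∈ S₁ a then b₁ a m else 0 with hbt₁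
  set bt₂ : ℝ → ℤ → ℂ := fun a m => if m ∈ S₂ a then b₂ a m else 0 with hbt₂
  -- Step 1: find N with uncountable set of good horizontal sections
  have step1 : ∃ N : ℕ, ¬ ({a : ℝ | S₁ a ⊆ Finset.Icc (-(N:ℤ)) N}).Countable := by
    by_contra hc
    push_neg at hc
    apply Cardinal.not_countable_real
    refine Set.Countable.mono ?_ (Set.countable_iUnion hc)
    intro a _
    refine Set.mem_iUnion.mpr ⟨(S₁ a).sup Int.natAbs, ?_⟩
    intro m hm
    have := Finset.le_sup (f := Int.natAbs) hm
    simp only [Finset.mem_Icc]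
    omega
  obtain ⟨N, hA⟩ := step1
  set A := {a : ℝ | S₁ a ⊆ Finset.Icc (-(N:ℤ)) N} with hAdef
  set K : ℕ := 2 * N + 1 with hK
  -- Step 2: nodes
  set t : Fin K → ℝ := fun j => (j : ℝ) * T₁ / (K : ℝ) with ht
  set u : Fin K → ℂ := fun j => EE T₁ 1 (t j) with hu
  have huinj : Function.Injective u := nodes_inj hT₁.ne' K (by omega)
  have hu0 : ∀ j, u j ≠ 0 := fun j => by
    rw [hu]; exact Complex.exp_ne_zero _
  set V : Matrix (Fin K) (Fin K) ℂ := Matrix.vandermonde u with hV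
  have hdet : IsUnit V.det := by
    rw [hV]
    exact (Matrix.det_vandermonde_ne_zero_iff.mpr huinj).isUnit
  set D : Matrix (Fin K) (Fin K) ℂ := V⁻¹ with hD
  have hinv : ∀ v : Fin K → ℂ, D.mulVec (V.mulVec v) = v := by
    intro v
    rw [hD, Matrix.mulVec_mulVec, Matrix.nonsing_inv_mul _ hdet, Matrix.one_mulVec]
  -- Step 3: Fin-indexed representation of horizontal sections over A
  set β : ℝ → Fin K → ℂ := fun a i => bt₁ a ((i : ℤ) - N) with hβ
  have hrep : ∀ a ∈ A, ∀ x : ℝ, f (x, a) = ∑ i : Fin K, β a i * EE T₁ ((i:ℤ) - N) x := by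
    intro a ha x
    rw [hb₁' a x, sum_extend (S₁ a) (Finset.Icc (-(N:ℤ)) N) ha (b₁ a) (fun m => EE T₁ m x)]
    rw [sum_Icc_eq_fin N (fun m => (if m ∈ S₁ a then b₁ a m else 0) * EE T₁ m x)]
  -- Step 4: solve for coefficients via Vandermonde
  have hEnode : ∀ (i : Fin K) (j : Fin K),
      EE T₁ ((i:ℤ) - N) (t j) = u j ^ (i : ℕ) * (u j) ^ (-(N:ℤ)) := by
    intro i j
    rw [EE_eq_pow hT₁.ne']
    have huj : EE T₁ 1 (t j) = u j := rfl
    rw [huj]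
    rw [← zpow_natCast (u j) (i : ℕ), ← zpow_add₀ (hu0 j)]
    congr 1
  have hnode : ∀ a ∈ A, V.mulVec (β a) = fun j => u j ^ (N : ℕ) * f (t j, a) := by
    intro a ha
    funext j
    rw [hrep a ha (t j)]
    rw [Finset.mul_sum]
    rw [hV]
    simp only [Matrix.mulVec, Matrix.vandermonde, dotProduct, Matrix.of_apply]
    refine Finset.sum_congr rfl fun i _ => ?_
    rw [hEnode i j]
    have : (u j : ℂ) ^ (N:ℕ) * (u j) ^ (-(N:ℤ)) = 1 := by
      rw [← zpow_natCast (u j) N, ← zpow_add₀ (hu0 j)]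
      simp
    calc u j ^ (i:ℕ) * β a i
        = β a i * (u j ^ (i:ℕ) * ((u j) ^ (N:ℕ) * (u j) ^ (-(N:ℤ)))) := by rw [this]; ring
      _ = u j ^ (N:ℕ) * (β a i * (u j ^ (i:ℕ) * (u j) ^ (-(N:ℤ)))) := by ring
  have hsolve : ∀ a ∈ A, ∀ i, β a i = ∑ j, D i j * (u j ^ (N:ℕ) * f (t j, a)) := by
    intro a ha i
    have := hinv (β a)
    rw [hnode a ha] at this
    conv_lhs => rw [← this]
    rfl
  -- Step 5: linear interpolation formula on A
  set c : Fin K → ℝ → ℂ := fun j x => ∑ i, D i j * u j ^ (N:ℕ) * EE T₁ ((i:ℤ) - N) x with hc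
  have step5 : ∀ x : ℝ, ∀ a ∈ A, f (x, a) = ∑ j, c j x * f (t j, a) := by
    intro x a ha
    rw [hrep a ha x]
    calc ∑ i : Fin K, β a i * EE T₁ ((i:ℤ) - N) x
        = ∑ i : Fin K, ∑ j, D i j * (u j ^ (N:ℕ) * f (t j, a)) * EE T₁ ((i:ℤ) - N) x := by
          refine Finset.sum_congr rfl fun i _ => ?_
          rw [hsolve a ha i, Finset.sum_mul]
      _ = ∑ j, ∑ i : Fin K, D i j * (u j ^ (N:ℕ) * f (t j, a)) * EE T₁ ((i:ℤ) - N) x :=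
          Finset.sum_comm
      _ = ∑ j, c j x * f (t j, a) := by
          refine Finset.sum_congr rfl fun j _ => ?_
          rw [hc]
          simp only []
          rw [Finset.sum_mul]
          refine Finset.sum_congr rfl fun i _ => ?_
          ring
  -- Step 6: the interpolation formula holds everywhere
  set U₂ : Finset ℤ := Finset.univ.biUnion (fun j : Fin K => S₂ (t j)) with hU₂
  have hU₂j : ∀ j, S₂ (t j) ⊆ U₂ := fun j => by rw [hU₂]; exact Finset.subset_biUnion_of_mem (fun j => S₂ (t j)) (Finset.mem_univ j)
  have step6 : ∀ x y : ℝ, f (x, y) = ∑ j, c j x * f (t j, y) := by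
    intro x y
    set U : Finset ℤ := S₂ x ∪ U₂ with hU
    set B : ℤ → ℂ := fun m => bt₂ x m - ∑ j, c j x * bt₂ (t j) m with hB
    have hdiff : ∀ z : ℝ, f (x, z) - ∑ j, c j x * f (t j, z) = ∑ m ∈ U, B m * EE T₂ m z := by
      intro z
      have h1 : f (x, z) = ∑ m ∈ U, bt₂ x m * EE T₂ m z := by
        rw [hb₂' x z]
        exact sum_extend _ _ Finset.subset_union_left _ _
      have h2 : ∀ j, f (t j, z) = ∑ m ∈ U, bt₂ (t j) m * EE T₂ m z := by
        intro j
        rw [hb₂' (t j) z]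
        exact sum_extend _ _ ((hU₂j j).trans Finset.subset_union_right) _ _
      rw [h1]
      have h3 : ∑ j, c j x * f (t j, z) = ∑ m ∈ U, (∑ j, c j x * bt₂ (t j) m) * EE T₂ m z := by
        calc ∑ j, c j x * f (t j, z)
            = ∑ j, ∑ m ∈ U, c j x * (bt₂ (t j) m * EE T₂ m z) := by
              refine Finset.sum_congr rfl fun j _ => ?_
              rw [h2 j, Finset.mul_sum]
          _ = ∑ m ∈ U, ∑ j, c j x * (bt₂ (t j) m * EE T₂ m z) := Finset.sum_comm
          _ = ∑ m ∈ U, (∑ j, c j x * bt₂ (t j) m) * EE T₂ m z := by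
              refine Finset.sum_congr rfl fun m _ => ?_
              rw [Finset.sum_mul]
              exact Finset.sum_congr rfl fun j _ => by ring
      rw [h3, ← Finset.sum_sub_distrib]
      exact Finset.sum_congr rfl fun m _ => by rw [hB]; ring
    have hvan := trig_vanish hT₂.ne' U B A hA (fun a ha => by
      rw [← hdiff a, step5 x a ha, sub_self])
    have := hvan y
    rw [← hdiff y] at this
    exact sub_eq_zero.mp this
  -- Step 7: assemble the joint trigonometric polynomial
  set c' : ℤ × ℤ → ℂ := fun p => ∑ i : Fin K,
      if ((i:ℤ) - N) = p.1 then ∑ j, D i j * u j ^ (N:ℕ) * bt₂ (t j) p.2 else 0 with hc'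
  refine ⟨Finset.Icc (-(N:ℤ)) N ×ˢ U₂, c', fun x y => ?_⟩
  have hfty : ∀ j, f (t j, y) = ∑ n ∈ U₂, bt₂ (t j) n * EE T₂ n y := by
    intro j
    rw [hb₂' (t j) y]
    exact sum_extend _ _ (hU₂j j) _ _
  set term : Fin K → Fin K → ℤ → ℂ := fun j i n =>
    D i j * u j ^ (N:ℕ) * bt₂ (t j) n * (EE T₁ ((i:ℤ) - N) x * EE T₂ n y) with hterm
  have hLHS : f (x, y) = ∑ j, ∑ i : Fin K, ∑ n ∈ U₂, term j i n := by
    rw [step6 x y]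
    refine Finset.sum_congr rfl fun j _ => ?_
    rw [hfty j, hc]
    simp only []
    rw [Finset.sum_mul_sum]
    refine Finset.sum_congr rfl fun i _ => Finset.sum_congr rfl fun n _ => ?_
    rw [hterm]
    ring
  have hswap : ∑ j, ∑ i : Fin K, ∑ n ∈ U₂, term j i n
      = ∑ i : Fin K, ∑ n ∈ U₂, ∑ j, term j i n := by
    rw [Finset.sum_comm]
    exact Finset.sum_congr rfl fun i _ => Finset.sum_comm
  have hc'eval : ∀ (i : Fin K) (n : ℤ),
      c' ((i:ℤ) - N, n) = ∑ j, D i j * u j ^ (N:ℕ) * bt₂ (t j) n := by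
    intro i n
    rw [hc']
    simp only []
    rw [Finset.sum_eq_single i]
    · rw [if_pos rfl]
    · intro i' _ hne
      rw [if_neg]
      intro h
      apply hne
      have : (i' : ℤ) = (i : ℤ) := by omega
      exact Fin.ext (by exact_mod_cast this)
    · intro h
      exact absurd (Finset.mem_univ i) h
  rw [hLHS, hswap]
  rw [Finset.sum_product]
  rw [sum_Icc_eq_fin N (fun m => ∑ n ∈ U₂, c' (m, n) *
    Complex.exp (2 * Real.pi * Complex.I *
      ((m : ℂ) * (x : ℂ) / (T₁ : ℂ) + (n : ℂ) * (y : ℂ) / (T₂ : ℂ))))]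
  refine Finset.sum_congr rfl fun i _ => Finset.sum_congr rfl fun n hn => ?_
  rw [hc'eval i n, ← EE_mul, Finset.sum_mul]
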